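/- Let σ : [0,1] → X_free ⊆ ℝ^d be a continuous path with clearance 2α (meaning the closed ball of radius 2α around σ(t) is contained in X_free for all t). If N ⊆ X_free is an α-net of X_free, then there exists a finite sequence of points x₀ = σ(0), x₁, …, x_{m−1}, x_m = σ(1) with each intermediate x_i ∈ N, such that consecutive points are at distance at most 4α and each straight-line segment between consecutive points lies entirely in X_free. -/
import Mathlib


/-- If `σ : [0,1] → X_free` is a continuous path with clearance `2α` and `N ⊆ X_free` is
an `α`-net of `X_free`, then there is a finite sequence of waypoints starting at `σ 0`
and ending at `σ 1`, with all intermediate waypoints in `N`, such that consecutive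
waypoints are at distance at most `4α` and each connecting segment lies in `X_free`. -/
theorem stmt3 {d : ℕ} (Xfree N : Set (EuclideanSpace ℝ (Fin d))) (α : ℝ) (hα : 0 < α)
    (σ : ℝ → EuclideanSpace ℝ (Fin d))
    (hσcont : ContinuousOn σ (Set.Icc 0 1))
    (hclear : ∀ t ∈ Set.Icc (0 : ℝ) 1, Metric.closedBall (σ t) (2 * α) ⊆ Xfree)
    (hNX : N ⊆ Xfree)
    (hnet : ∀ x ∈ Xfree, ∃ p ∈ N, dist x p ≤ α) :
    ∃ (m : ℕ) (x : ℕ → EuclideanSpace ℝ (Fin d)),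
      x 0 = σ 0 ∧ x m = σ 1 ∧
      (∀ i, 0 < i → i < m → x i ∈ N) ∧
      (∀ i < m, dist (x i) (x (i + 1)) ≤ 4 * α ∧
        segment ℝ (x i) (x (i + 1)) ⊆ Xfree) := by
  have hunif : UniformContinuousOn σ (Set.Icc 0 1) :=
    isCompact_Icc.uniformContinuousOn_of_continuous hσcont
  rw [Metric.uniformContinuousOn_iff] at hunif
  obtain ⟨δ, hδ, hδ'⟩ := hunif α hα
  obtain ⟨n, hn⟩ := exists_nat_gt (1 / δ)
  have hn0 : 0 < n := by
    have h : (0 : ℝ) < n := lt_of_le_of_lt (by positivity) hn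
    exact_mod_cast h
  have hnR : (0 : ℝ) < n := by exact_mod_cast hn0
  have hstep : (1 : ℝ) / n < δ := by
    rw [div_lt_iff₀ hnR]
    rw [div_lt_iff₀ hδ] at hn
    linarith
  have htmem : ∀ i ≤ n, ((i : ℝ) / n) ∈ Set.Icc (0 : ℝ) 1 := by
    intro i hi
    refine ⟨by positivity, ?_⟩
    rw [div_le_one hnR]
    exact_mod_cast hi
  have hpick : ∀ i : ℕ, ∃ q, if i = 0 then q = σ 0 else if n ≤ i then q = σ 1 else
      q ∈ N ∧ dist (σ ((i : ℝ) / n)) q ≤ α := by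
    intro i
    by_cases h0 : i = 0
    · exact ⟨σ 0, by simp [h0]⟩
    by_cases h1 : n ≤ i
    · exact ⟨σ 1, by simp [h0, h1]⟩
    · have hi : i ≤ n := le_of_lt (lt_of_not_ge h1)
      have hmem : σ ((i : ℝ) / n) ∈ Xfree :=
        hclear _ (htmem i hi) (Metric.mem_closedBall_self (by linarith))
      obtain ⟨p, hp, hdp⟩ := hnet _ hmem
      refine ⟨p, ?_⟩
      rw [if_neg h0, if_neg h1]
      exact ⟨hp, hdp⟩
  choose x hx using hpick
  have hkey : ∀ i ≤ n, dist (x i) (σ ((i : ℝ) / n)) ≤ α := by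
    intro i hi
    by_cases h0 : i = 0
    · have h := hx i; rw [if_pos h0] at h
      subst h0
      simp [h, hα.le]
    by_cases h1 : n ≤ i
    · have hin : i = n := le_antisymm hi h1
      have h := hx i; rw [if_neg h0, if_pos h1] at h
      have hnn : ((i : ℝ) / n) = 1 := by rw [hin]; exact div_self hnR.ne'
      rw [h, hnn]
      simp [hα.le]
    · have h := hx i; rw [if_neg h0, if_neg h1] at h
      rw [dist_comm]
      exact h.2
  refine ⟨n, x, ?_, ?_, ?_, ?_⟩
  · have h := hx 0; rwa [if_pos rfl] at h
  · have h := hx n; rwa [if_neg hn0.ne', if_pos le_rfl] at h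
  · intro i h0 h1
    have h := hx i; rw [if_neg h0.ne', if_neg (not_le.mpr h1)] at h
    exact h.1
  · intro i hi
    have hi1 : i + 1 ≤ n := hi
    have hadj : dist (σ ((i : ℝ) / n)) (σ (((i + 1 : ℕ) : ℝ) / n)) < α := by
      apply hδ' _ (htmem i hi.le) _ (htmem (i + 1) hi1)
      push_cast
      rw [Real.dist_eq, show ((i : ℝ)) / n - ((i : ℝ) + 1) / n = -(1 / n) by ring,
        abs_neg, abs_of_nonneg (by positivity)]
      exact hstep
    have h1 : dist (x i) (σ ((i : ℝ) / n)) ≤ α := hkey i hi.le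
    have h2 : dist (x (i + 1)) (σ (((i + 1 : ℕ) : ℝ) / n)) ≤ α := hkey (i + 1) hi1
    have h3 : dist (x (i + 1)) (σ ((i : ℝ) / n)) ≤ 2 * α := by
      calc dist (x (i + 1)) (σ ((i : ℝ) / n))
          ≤ dist (x (i + 1)) (σ (((i + 1 : ℕ) : ℝ) / n))
            + dist (σ (((i + 1 : ℕ) : ℝ) / n)) (σ ((i : ℝ) / n)) := dist_triangle _ _ _
        _ ≤ α + α := add_le_add h2 (le_of_lt (by rw [dist_comm]; exact hadj))
        _ = 2 * α := by ring
    constructor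
    · calc dist (x i) (x (i + 1))
          ≤ dist (x i) (σ ((i : ℝ) / n)) + dist (σ ((i : ℝ) / n)) (x (i + 1)) :=
            dist_triangle _ _ _
        _ ≤ α + 2 * α := add_le_add h1 (by rw [dist_comm]; exact h3)
        _ ≤ 4 * α := by linarith
    · refine Set.Subset.trans ?_ (hclear _ (htmem i hi.le))
      apply (convex_closedBall (σ ((i : ℝ) / n)) (2 * α)).segment_subset
      · exact Metric.mem_closedBall.mpr (by linarith)
      · exact Metric.mem_closedBall.mpr h3
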